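/- For every nonnegative integer n, (-1)^n * sum over k from 0 to n of S(n,k) * (-1)^k * D_k equals sum over k from 0 to n of binomial(n,k) * (-1)^k * b_k, where D_k are derangement numbers and b_k are Bell numbers. -/

import Mathlib

/-- Stirling numbers of the second kind. -/
def S2 : ℕ → ℕ → ℕ
  | 0, 0 => 1
  | 0, _ + 1 => 0
  | _ + 1, 0 => 0
  | n + 1, k + 1 => (k + 1) * S2 n (k + 1) + S2 n k

/-- Bell numbers. -/
def bell (m : ℕ) : ℕ := ∑ k ∈ Finset.range (m + 1), S2 m k

lemma S2_zero_right (n : ℕ) : S2 (n+1) 0 = 0 := rfl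

lemma S2_rec (n k : ℕ) : S2 (n+1) (k+1) = (k + 1) * S2 n (k+1) + S2 n k := rfl

lemma S2_eq_zero : ∀ n k, n < k → S2 n k = 0
  | 0, 0, h => absurd h (by omega)
  | 0, _+1, _ => rfl
  | _+1, 0, h => absurd h (by omega)
  | n+1, k+1, h => by
      rw [S2_rec, S2_eq_zero n (k+1) (by omega), S2_eq_zero n k (by omega)]
      simp

lemma S2_succ_eq_sum : ∀ n, ∀ k, S2 (n+1) (k+1) = ∑ m ∈ Finset.range (n+1), n.choose m * S2 m k := by
  intro n
  induction n with
  | zero =>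
    intro k
    cases k <;> simp [S2]
  | succ n ih =>
    intro k
    rw [S2_rec, ih k]
    rw [Finset.sum_range_succ' (fun m => (n+1).choose m * S2 m k)]
    have hsplit : ∑ i ∈ Finset.range (n+1), (n+1).choose (i+1) * S2 (i+1) k
        = (∑ i ∈ Finset.range (n+1), n.choose i * S2 (i+1) k)
          + ∑ i ∈ Finset.range (n+1), n.choose (i+1) * S2 (i+1) k := by
      rw [← Finset.sum_add_distrib]
      exact Finset.sum_congr rfl fun i _ => by
        rw [Nat.choose_succ_succ n i, Nat.add_mul]
    rw [hsplit]
    have h2 : (∑ i ∈ Finset.range (n+1), n.choose (i+1) * S2 (i+1) k) + S2 0 k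
        = ∑ m ∈ Finset.range (n+1), n.choose m * S2 m k := by
      have e := Finset.sum_range_succ' (fun m => n.choose m * S2 m k) (n+1)
      rw [Finset.sum_range_succ, Nat.choose_succ_self, Nat.zero_mul, Nat.add_zero] at e
      simpa using e.symm
    have h3 : ∑ i ∈ Finset.range (n+1), n.choose i * S2 (i+1) k
        = k * (∑ m ∈ Finset.range (n+1), n.choose m * S2 m k) + S2 (n+1) k := by
      cases k with
      | zero => simp [S2_zero_right]
      | succ j =>
        rw [ih j, Finset.mul_sum, ← Finset.sum_add_distrib]
        exact Finset.sum_congr rfl fun i _ => by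
          rw [S2_rec i j]; ring
    rw [add_assoc, Nat.choose_zero_right, Nat.one_mul, h2, h3]
    ring

lemma S2_le_sum (m n : ℕ) (h : m ≤ n) :
    ∑ k ∈ Finset.range (n+1), S2 m k = bell m := by
  rw [bell]
  symm
  apply Finset.sum_subset (Finset.range_subset_range.2 (by omega))
  intro x _ hx
  simp only [Finset.mem_range, not_lt] at hx
  exact S2_eq_zero m x (by omega)

lemma bell_succ (n : ℕ) : bell (n+1) = ∑ m ∈ Finset.range (n+1), n.choose m * bell m := by
  rw [bell, Finset.sum_range_succ' (fun k => S2 (n+1) k)]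
  rw [show S2 (n+1) 0 = 0 from rfl, add_zero]
  have : ∑ i ∈ Finset.range (n+1), S2 (n+1) (i+1)
      = ∑ i ∈ Finset.range (n+1), ∑ m ∈ Finset.range (n+1), n.choose m * S2 m i :=
    Finset.sum_congr rfl fun i _ => S2_succ_eq_sum n i
  rw [this, Finset.sum_comm]
  refine Finset.sum_congr rfl fun m hm => ?_
  simp only [Finset.mem_range] at hm
  rw [← Finset.mul_sum, S2_le_sum m n (by omega)]

lemma inversion (n : ℕ) :
    ∑ k ∈ Finset.range (n+1), (-1 : ℤ)^k * (n.choose k) * (bell (k+1)) = (-1)^n * bell n := by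
  have hb : ∀ k ∈ Finset.range (n+1),
      (-1 : ℤ)^k * (n.choose k) * (bell (k+1))
        = ∑ m ∈ Finset.range (n+1), (-1 : ℤ)^k * (n.choose k) * (k.choose m) * bell m := by
    intro k hk
    simp only [Finset.mem_range] at hk
    have h1 : ∑ m ∈ Finset.range (n+1), (-1 : ℤ)^k * (n.choose k) * (k.choose m) * bell m
        = ∑ m ∈ Finset.range (k+1), (-1 : ℤ)^k * (n.choose k) * (k.choose m) * bell m := by
      symm
      apply Finset.sum_subset (Finset.range_subset_range.2 (by omega))
      intro x hx hx2
      simp only [Finset.mem_range, not_lt] at hx hx2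
      rw [show k.choose x = 0 from Nat.choose_eq_zero_of_lt (by omega)]
      push_cast; ring
    rw [h1, bell_succ k]
    push_cast
    rw [Finset.mul_sum]
    exact Finset.sum_congr rfl fun i _ => by ring
  rw [Finset.sum_congr rfl hb, Finset.sum_comm]
  have hinner : ∀ m ∈ Finset.range (n+1),
      ∑ k ∈ Finset.range (n+1), (-1 : ℤ)^k * (n.choose k) * (k.choose m) * bell m
        = (if m = n then (-1 : ℤ)^n * bell n else 0) := by
    intro m hm
    simp only [Finset.mem_range] at hm
    have step1 : ∑ k ∈ Finset.range (n+1), (-1 : ℤ)^k * (n.choose k) * (k.choose m) * bell m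
        = ∑ k ∈ Finset.Ico m (n+1), (-1 : ℤ)^k * (n.choose k) * (k.choose m) * bell m := by
      symm
      apply Finset.sum_subset
      · intro x hx
        simp only [Finset.mem_Ico] at hx
        simp only [Finset.mem_range]
        omega
      · intro x hx hx2
        simp only [Finset.mem_range] at hx
        simp only [Finset.mem_Ico, not_and, not_lt] at hx2
        rw [show x.choose m = 0 from Nat.choose_eq_zero_of_lt (by omega)]
        push_cast; ring
    rw [step1, Finset.sum_Ico_eq_sum_range]
    have hlen : n + 1 - m = (n - m) + 1 := by omega
    have step2 : ∀ j ∈ Finset.range (n + 1 - m),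
        (-1 : ℤ)^(m+j) * (n.choose (m+j)) * ((m+j).choose m) * bell m
          = ((-1 : ℤ)^m * (n.choose m) * bell m) * ((-1 : ℤ)^j * ((n-m).choose j)) := by
      intro j hj
      simp only [Finset.mem_range] at hj
      have hnat : n.choose (m+j) * (m+j).choose m = n.choose m * (n-m).choose j := by
        have := Nat.choose_mul (n := n) (show m ≤ m + j by omega)
        simpa [Nat.add_sub_cancel_left] using this
      have hcast : ((n.choose (m+j)) : ℤ) * ((m+j).choose m)
          = (n.choose m : ℤ) * ((n-m).choose j) := by exact_mod_cast hnat
      rw [pow_add]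
      linear_combination ((-1 : ℤ)^m * (-1)^j * (bell m : ℤ)) * hcast
    rw [Finset.sum_congr rfl step2, ← Finset.mul_sum, hlen, Int.alternating_sum_range_choose]
    by_cases h : m = n
    · subst h; simp
    · rw [if_neg (by omega), if_neg h]; ring
  rw [Finset.sum_congr rfl hinner, Finset.sum_ite_eq' (Finset.range (n+1)) n]
  simp

lemma bell_cast (n : ℕ) : (bell n : ℤ) = ∑ k ∈ Finset.range (n+1), (S2 n k : ℤ) := by
  rw [bell]; push_cast; ring

lemma L_rec (n : ℕ) :
    ∑ k ∈ Finset.range (n+2), (S2 (n+1) k : ℤ) * (-1)^k * (numDerangements k : ℤ)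
      = (bell n : ℤ) - ∑ k ∈ Finset.range (n+1), (S2 n k : ℤ) * (-1)^k * (numDerangements k : ℤ) := by
  rw [Finset.sum_range_succ' (fun k => (S2 (n+1) k : ℤ) * (-1)^k * (numDerangements k : ℤ))]
  rw [show S2 (n+1) 0 = 0 from rfl]
  push_cast
  rw [zero_mul, add_zero]
  have expand : ∀ j ∈ Finset.range (n+1),
      (S2 (n+1) (j+1) : ℤ) * (-1)^(j+1) * (numDerangements (j+1) : ℤ)
        = ((j : ℤ) + 1) * (S2 n (j+1) : ℤ) * (-1)^(j+1) * (numDerangements (j+1) : ℤ)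
          + (S2 n j : ℤ) * (-1)^(j+1) * (numDerangements (j+1) : ℤ) := by
    intro j _
    rw [S2_rec n j]
    push_cast
    ring
  rw [Finset.sum_congr rfl expand, Finset.sum_add_distrib]
  have hA : ∑ j ∈ Finset.range (n+1),
        ((j : ℤ) + 1) * (S2 n (j+1) : ℤ) * (-1)^(j+1) * (numDerangements (j+1) : ℤ)
      = ∑ j ∈ Finset.range (n+1),
        (j : ℤ) * (S2 n j : ℤ) * (-1)^j * (numDerangements j : ℤ) := by
    have e := Finset.sum_range_succ'
      (fun k => (k : ℤ) * (S2 n k : ℤ) * (-1)^k * (numDerangements k : ℤ)) (n+1)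
    rw [Finset.sum_range_succ] at e
    rw [show S2 n (n+1) = 0 from S2_eq_zero n (n+1) (by omega)] at e
    push_cast at e
    simp only [zero_mul, mul_zero, add_zero, zero_add] at e
    rw [← e]
  rw [hA, ← Finset.sum_add_distrib]
  have pt : ∀ j ∈ Finset.range (n+1),
      (j : ℤ) * (S2 n j : ℤ) * (-1)^j * (numDerangements j : ℤ)
        + (S2 n j : ℤ) * (-1)^(j+1) * (numDerangements (j+1) : ℤ)
      = (S2 n j : ℤ) - (S2 n j : ℤ) * (-1)^j * (numDerangements j : ℤ) := by
    intro j _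
    rw [numDerangements_succ]
    have hsq : (-1 : ℤ)^j * (-1)^j = 1 := by
      rw [← pow_add]; exact Even.neg_one_pow ⟨j, rfl⟩
    linear_combination (S2 n j : ℤ) * hsq
  rw [Finset.sum_congr rfl pt, Finset.sum_sub_distrib, ← bell_cast]

lemma R_rec (n : ℕ) :
    ∑ k ∈ Finset.range (n+2), ((n+1).choose k : ℤ) * (-1)^k * (bell k : ℤ)
      = (-1)^(n+1) * (bell n : ℤ)
        + ∑ k ∈ Finset.range (n+1), (n.choose k : ℤ) * (-1)^k * (bell k : ℤ) := by
  rw [Finset.sum_range_succ' (fun k => ((n+1).choose k : ℤ) * (-1)^k * (bell k : ℤ))]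
  have hsplit : ∀ j ∈ Finset.range (n+1),
      ((n+1).choose (j+1) : ℤ) * (-1)^(j+1) * (bell (j+1) : ℤ)
        = (-1) * ((-1 : ℤ)^j * (n.choose j : ℤ) * (bell (j+1) : ℤ))
          + (n.choose (j+1) : ℤ) * (-1)^(j+1) * (bell (j+1) : ℤ) := by
    intro j _
    rw [Nat.choose_succ_succ n j]
    push_cast
    ring
  rw [Finset.sum_congr rfl hsplit, Finset.sum_add_distrib, ← Finset.mul_sum, inversion n]
  have e := Finset.sum_range_succ'
    (fun k => (n.choose k : ℤ) * (-1)^k * (bell k : ℤ)) (n+1)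
  rw [Finset.sum_range_succ] at e
  rw [show n.choose (n+1) = 0 from Nat.choose_succ_self n] at e
  push_cast at e
  simp only [zero_mul, add_zero, mul_one, one_mul, pow_zero, Nat.choose_zero_right,
    Nat.cast_one, Nat.cast_zero] at e ⊢
  linear_combination -e

theorem stirling2_derangement_transform (n : ℕ) :
    (-1 : ℤ) ^ n *
        ∑ k ∈ Finset.range (n + 1), (S2 n k : ℤ) * (-1) ^ k * (numDerangements k : ℤ) =
      ∑ k ∈ Finset.range (n + 1), (Nat.choose n k : ℤ) * (-1) ^ k * (bell k : ℤ) := by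
  induction n with
  | zero => norm_num [Finset.sum_range_one, S2, bell]
  | succ n ih =>
    rw [show n + 1 + 1 = n + 2 from rfl, L_rec n, R_rec n]
    linear_combination ih
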